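/- Let n ≥ 2, ρ ∈ (0, 1/2], and ε ∈ (0, 1). Let (G(k))_{k≥1} be a sequence of rooted communication graphs on n nodes and let Ĝ(ℓ) = G((ℓ−1)(n−1)+1) ∘ ⋯ ∘ G(ℓ(n−1)) be the communication graph at macro-round ℓ. Let x : ℕ → ℝ^n satisfy x(0) ∈ [0,1]^n and, for each ℓ ≥ 1, x(ℓ) is a ρ-safe update of x(ℓ−1) along Ĝ(ℓ). Then δ(x(L)) ≤ ε for L = ⌈log_{1/(1−ρ)}(1/ε)⌉. (In a rooted network model, the amortized version of a ρ-safe averaging algorithm achieves ε-agreement in (n−1)·⌈log_{1/(1−ρ)}(1/ε)⌉ rounds.) -/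

import Mathlib

/-- `δ(x) = max_p x_p − min_p x_p`. -/
noncomputable def delta {n : ℕ} (x : Fin n → ℝ) : ℝ :=
  sSup (Set.range x) - sInf (Set.range x)

/-- A communication graph is rooted if there is a node `r` from which every node is
reachable by a directed path. -/
def Rooted {n : ℕ} (E : Fin n → Fin n → Prop) : Prop :=
  ∃ r, ∀ p, Relation.ReflTransGen E r p

/-- `ProdSeg G a m` is the product `G (a+1) ∘ G (a+2) ∘ ⋯ ∘ G (a+m)`, where the product
`G ∘ H` has an edge `(p,q)` iff there is `r` with `(p,r) ∈ G` and `(r,q) ∈ H`;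
the empty product is the identity graph. -/
def ProdSeg {n : ℕ} (G : ℕ → Fin n → Fin n → Prop) (a : ℕ) : ℕ → Fin n → Fin n → Prop
  | 0 => fun p q => p = q
  | m + 1 => fun p q => ∃ r, ProdSeg G a m p r ∧ G (a + m + 1) r q

/-- `x'` is a ρ-safe update of `x` along the graph `E`. -/
def SafeUpdate {n : ℕ} (ρ : ℝ) (E : Fin n → Fin n → Prop) (x x' : Fin n → ℝ) : Prop :=
  ∀ p, ρ * sSup (x '' {q | E q p}) + (1 - ρ) * sInf (x '' {q | E q p}) ≤ x' p ∧
       x' p ≤ (1 - ρ) * sSup (x '' {q | E q p}) + ρ * sInf (x '' {q | E q p})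

section AuxCombinatorics

variable {n : ℕ} {G : ℕ → Fin n → Fin n → Prop}

lemma prodSeg_self (hrefl : ∀ k, 1 ≤ k → ∀ p, G k p p) (a m : ℕ) (p : Fin n) :
    ProdSeg G a m p p := by
  induction m with
  | zero => rfl
  | succ m ih => exact ⟨p, ih, hrefl _ (by omega) p⟩

lemma prodSeg_front (a m : ℕ) (p q : Fin n) :
    ProdSeg G a (m + 1) p q ↔ ∃ r, G (a + 1) p r ∧ ProdSeg G (a + 1) m r q := by
  induction m generalizing q with
  | zero => simp [ProdSeg]
  | succ m ih =>
    have hidx : a + (m + 1) + 1 = a + 1 + m + 1 := by omega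
    constructor
    · rintro ⟨s, hs, he⟩
      obtain ⟨r, h1, h2⟩ := (ih s).mp hs
      exact ⟨r, h1, s, h2, by rw [← hidx]; exact he⟩
    · rintro ⟨r, h1, s, h2, he⟩
      exact ⟨s, (ih s).mpr ⟨r, h1, h2⟩, by rw [hidx]; exact he⟩

open Classical in
noncomputable def back (G : ℕ → Fin n → Fin n → Prop) (a m : ℕ) (q : Fin n) :
    Finset (Fin n) :=
  Finset.univ.filter fun p => ProdSeg G a m p q

open Classical in
lemma mem_back {a m : ℕ} {p q : Fin n} :
    p ∈ back G a m q ↔ ProdSeg G a m p q := by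
  simp [back]

lemma reach_mem {E : Fin n → Fin n → Prop} {S : Finset (Fin n)}
    (hcl : ∀ p r, E p r → r ∈ S → p ∈ S) {a b : Fin n}
    (h : Relation.ReflTransGen E a b) : b ∈ S → a ∈ S := by
  induction h with
  | refl => exact fun h => h
  | tail h1 h2 ih => exact fun hb => ih (hcl _ _ h2 hb)

lemma back_growth (hrefl : ∀ k, 1 ≤ k → ∀ p, G k p p)
    (hrooted : ∀ k, 1 ≤ k → Rooted (G k)) :
    ∀ m a (q1 q2 : Fin n),
      (∃ p, ProdSeg G a m p q1 ∧ ProdSeg G a m p q2) ∨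
      m + 2 ≤ (back G a m q1 ∪ back G a m q2).card := by
  intro m
  induction m with
  | zero =>
    intro a q1 q2
    by_cases h : q1 = q2
    · exact Or.inl ⟨q1, rfl, h⟩
    · right
      have h1 : back G a 0 q1 = {q1} := by
        ext p; rw [mem_back]; simp [ProdSeg]
      have h2 : back G a 0 q2 = {q2} := by
        ext p; rw [mem_back]; simp [ProdSeg]
      rw [h1, h2]
      rw [Finset.card_union_of_disjoint (by simp [h, Ne.symm])]
      simp
  | succ m ih =>
    intro a q1 q2
    set S1 := back G (a + 1) m q1 with hS1
    set S2 := back G (a + 1) m q2 with hS2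
    set T1 := back G a (m + 1) q1 with hT1
    set T2 := back G a (m + 1) q2 with hT2
    have hTmem : ∀ (q : Fin n) p, p ∈ back G a (m + 1) q ↔
        ∃ r, G (a + 1) p r ∧ r ∈ back G (a + 1) m q := by
      intro q p
      rw [mem_back, prodSeg_front]
      simp only [mem_back]
    have hST1 : S1 ⊆ T1 := fun p hp =>
      (hTmem q1 p).mpr ⟨p, hrefl _ (by omega) p, hp⟩
    have hST2 : S2 ⊆ T2 := fun p hp =>
      (hTmem q2 p).mpr ⟨p, hrefl _ (by omega) p, hp⟩
    rcases ih (a + 1) q1 q2 with ⟨p, h1, h2⟩ | hcard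
    · left
      exact ⟨p, (prodSeg_front a m p q1).mpr ⟨p, hrefl _ (by omega) p, h1⟩,
        (prodSeg_front a m p q2).mpr ⟨p, hrefl _ (by omega) p, h2⟩⟩
    · by_cases hT : ∃ p, p ∈ T1 ∧ p ∈ T2
      · obtain ⟨p, hp1, hp2⟩ := hT
        exact Or.inl ⟨p, mem_back.mp hp1, mem_back.mp hp2⟩
      · by_cases hgrow : ∃ p, p ∈ T1 ∪ T2 ∧ p ∉ S1 ∪ S2
        · right
          obtain ⟨p, hp, hps⟩ := hgrow
          have hsub : S1 ∪ S2 ⊂ T1 ∪ T2 := by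
            constructor
            · exact Finset.union_subset_union hST1 hST2
            · intro hc
              exact hps (hc hp)
          have hlt := Finset.card_lt_card hsub
          have hcard' : m + 2 ≤ (S1 ∪ S2).card := hcard
          omega
        · exfalso
          push_neg at hgrow
          have hTeq1 : T1 = S1 := by
            apply Finset.Subset.antisymm _ hST1
            intro p hp
            have := hgrow p (Finset.mem_union_left _ hp)
            rcases Finset.mem_union.mp this with h | h
            · exact h
            · exact absurd ⟨p, hp, hST2 h⟩ hT
          have hTeq2 : T2 = S2 := by
            apply Finset.Subset.antisymm _ hST2
            intro p hp
            have := hgrow p (Finset.mem_union_right _ hp)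
            rcases Finset.mem_union.mp this with h | h
            · exact absurd ⟨p, hST1 h, hp⟩ hT
            · exact h
          have hcl1 : ∀ p r, G (a + 1) p r → r ∈ S1 → p ∈ S1 := by
            intro p r he hr
            rw [← hTeq1]
            exact (hTmem q1 p).mpr ⟨r, he, hr⟩
          have hcl2 : ∀ p r, G (a + 1) p r → r ∈ S2 → p ∈ S2 := by
            intro p r he hr
            rw [← hTeq2]
            exact (hTmem q2 p).mpr ⟨r, he, hr⟩
          obtain ⟨r0, hr0⟩ := hrooted (a + 1) (by omega)
          have hq1 : q1 ∈ S1 := mem_back.mpr (prodSeg_self hrefl _ _ _)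
          have hq2 : q2 ∈ S2 := mem_back.mpr (prodSeg_self hrefl _ _ _)
          have h01 : r0 ∈ S1 := reach_mem hcl1 (hr0 q1) hq1
          have h02 : r0 ∈ S2 := reach_mem hcl2 (hr0 q2) hq2
          exact hT ⟨r0, hST1 h01, hST2 h02⟩

lemma nonsplit (hn : 2 ≤ n) (hrefl : ∀ k, 1 ≤ k → ∀ p, G k p p)
    (hrooted : ∀ k, 1 ≤ k → Rooted (G k)) (a : ℕ) (q1 q2 : Fin n) :
    ∃ p, ProdSeg G a (n - 1) p q1 ∧ ProdSeg G a (n - 1) p q2 := by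
  rcases back_growth hrefl hrooted (n - 1) a q1 q2 with h | h
  · exact h
  · exfalso
    have hle : (back G a (n - 1) q1 ∪ back G a (n - 1) q2).card ≤ n := by
      simpa using Finset.card_le_univ (back G a (n - 1) q1 ∪ back G a (n - 1) q2)
    omega

end AuxCombinatorics

section AuxAnalysis

variable {n : ℕ}

lemma safe_contract (hn : 0 < n) {ρ : ℝ} (hρ0 : 0 < ρ) (hρ2 : ρ ≤ 1 / 2)
    {E : Fin n → Fin n → Prop}
    (hns : ∀ p p', ∃ s, E s p ∧ E s p')
    {x x' : Fin n → ℝ} (h : SafeUpdate ρ E x x') :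
    delta x' ≤ (1 - ρ) * delta x := by
  have hρ1 : (0:ℝ) ≤ 1 - ρ := by linarith
  have hρnn : (0:ℝ) ≤ ρ := le_of_lt hρ0
  have hSne : ∀ p : Fin n, (x '' {q | E q p}).Nonempty := by
    intro p
    obtain ⟨s, hs, _⟩ := hns p p
    exact ⟨x s, s, hs, rfl⟩
  have hSfin : ∀ p : Fin n, (x '' {q | E q p}).Finite :=
    fun p => (Set.toFinite _).image x
  have hrfin : (Set.range x).Finite := Set.finite_range x
  have hrfin' : (Set.range x').Finite := Set.finite_range x'
  have hrne : (Set.range x).Nonempty := ⟨x ⟨0, hn⟩, Set.mem_range_self _⟩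
  have hrne' : (Set.range x').Nonempty := ⟨x' ⟨0, hn⟩, Set.mem_range_self _⟩
  set M := sSup (Set.range x)
  set m := sInf (Set.range x)
  have hsuple : ∀ p : Fin n, sSup (x '' {q | E q p}) ≤ M :=
    fun p => csSup_le_csSup hrfin.bddAbove (hSne p)
      (Set.image_subset_range x _)
  have hinfge : ∀ p : Fin n, m ≤ sInf (x '' {q | E q p}) :=
    fun p => csInf_le_csInf hrfin.bddBelow (hSne p)
      (Set.image_subset_range x _)
  obtain ⟨p, hp⟩ := hrne'.csSup_mem hrfin'
  obtain ⟨p', hp'⟩ := hrne'.csInf_mem hrfin'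
  obtain ⟨s, hs1, hs2⟩ := hns p p'
  have hxsS1 : x s ∈ x '' {q | E q p} := ⟨s, hs1, rfl⟩
  have hxsS2 : x s ∈ x '' {q | E q p'} := ⟨s, hs2, rfl⟩
  have h1 : sInf (x '' {q | E q p}) ≤ x s := csInf_le (hSfin p).bddBelow hxsS1
  have h2 : x s ≤ sSup (x '' {q | E q p'}) := le_csSup (hSfin p').bddAbove hxsS2
  have hub := (h p).2
  have hlb := (h p').1
  have e1 : (1 - ρ) * sSup (x '' {q | E q p}) ≤ (1 - ρ) * M :=
    mul_le_mul_of_nonneg_left (hsuple p) hρ1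
  have e2 : ρ * sInf (x '' {q | E q p}) ≤ ρ * x s :=
    mul_le_mul_of_nonneg_left h1 hρnn
  have e3 : ρ * x s ≤ ρ * sSup (x '' {q | E q p'}) :=
    mul_le_mul_of_nonneg_left h2 hρnn
  have e4 : (1 - ρ) * m ≤ (1 - ρ) * sInf (x '' {q | E q p'}) :=
    mul_le_mul_of_nonneg_left (hinfge p') hρ1
  have hδ : delta x' = x' p - x' p' := by rw [delta, hp, hp']
  rw [hδ, delta]
  linarith

lemma delta_le_pow {ρ : ℝ} (hρ1 : (0:ℝ) ≤ 1 - ρ)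
    (x : ℕ → Fin n → ℝ)
    (hstep : ∀ k, delta (x (k + 1)) ≤ (1 - ρ) * delta (x k)) :
    ∀ k, delta (x k) ≤ (1 - ρ) ^ k * delta (x 0) := by
  intro k
  induction k with
  | zero => simp
  | succ k ih =>
    calc delta (x (k + 1)) ≤ (1 - ρ) * delta (x k) := hstep k
      _ ≤ (1 - ρ) * ((1 - ρ) ^ k * delta (x 0)) :=
          mul_le_mul_of_nonneg_left ih hρ1
      _ = (1 - ρ) ^ (k + 1) * delta (x 0) := by ring

lemma pow_le_eps {ρ ε : ℝ} (hρ0 : 0 < ρ) (hρ2 : ρ ≤ 1 / 2)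
    (hε0 : 0 < ε) :
    (1 - ρ) ^ ⌈Real.logb (1 / (1 - ρ)) (1 / ε)⌉₊ ≤ ε := by
  set L := ⌈Real.logb (1 / (1 - ρ)) (1 / ε)⌉₊ with hL
  have hc0 : (0:ℝ) < 1 - ρ := by linarith
  have hc1 : (1:ℝ) - ρ < 1 := by linarith
  have hlc : Real.log (1 - ρ) < 0 := Real.log_neg hc0 hc1
  have hle : Real.logb (1 / (1 - ρ)) (1 / ε) ≤ (L : ℝ) := Nat.le_ceil _
  have hlogb : Real.logb (1 / (1 - ρ)) (1 / ε) = Real.log ε / Real.log (1 - ρ) := by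
    rw [Real.logb, one_div, one_div, Real.log_inv, Real.log_inv, neg_div_neg_eq]
  rw [hlogb] at hle
  have hmul : (L : ℝ) * Real.log (1 - ρ) ≤ Real.log ε :=
    (div_le_iff_of_neg hlc).mp hle
  have hpow : (1 - ρ) ^ L = Real.exp ((L : ℝ) * Real.log (1 - ρ)) := by
    rw [Real.exp_nat_mul, Real.exp_log hc0]
  rw [hpow]
  calc Real.exp ((L : ℝ) * Real.log (1 - ρ)) ≤ Real.exp (Real.log ε) :=
        Real.exp_le_exp.mpr hmul
    _ = ε := Real.exp_log hε0

end AuxAnalysis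

theorem amortized_safe_eps_agreement
    (n : ℕ) (hn : 2 ≤ n) (ρ ε : ℝ) (hρ0 : 0 < ρ) (hρ2 : ρ ≤ 1 / 2)
    (hε0 : 0 < ε) (hε1 : ε < 1)
    (G : ℕ → Fin n → Fin n → Prop)
    (hrefl : ∀ k, 1 ≤ k → ∀ p, G k p p)
    (hrooted : ∀ k, 1 ≤ k → Rooted (G k))
    (x : ℕ → Fin n → ℝ)
    (hx0 : ∀ p, x 0 p ∈ Set.Icc (0 : ℝ) 1)
    -- at each macro-round `l ≥ 1`, `x l` is a ρ-safe update of `x (l−1)` along the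
    -- macro-round graph `Ĝ(l) = G((l−1)(n−1)+1) ∘ ⋯ ∘ G(l(n−1))`
    (hupd : ∀ l, 1 ≤ l →
      SafeUpdate ρ (ProdSeg G ((l - 1) * (n - 1)) (n - 1)) (x (l - 1)) (x l)) :
    delta (x ⌈Real.logb (1 / (1 - ρ)) (1 / ε)⌉₊) ≤ ε := by
  have hn0 : 0 < n := by omega
  have hρ1 : (0:ℝ) ≤ 1 - ρ := by linarith
  -- each macro-round contracts δ by a factor (1 − ρ)
  have hstep : ∀ k, delta (x (k + 1)) ≤ (1 - ρ) * delta (x k) := by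
    intro k
    have hu := hupd (k + 1) (by omega)
    simp only [Nat.add_sub_cancel] at hu
    exact safe_contract hn0 hρ0 hρ2
      (fun p p' => nonsplit hn hrefl hrooted (k * (n - 1)) p p') hu
  have hiter := delta_le_pow hρ1 x hstep
  -- δ(x 0) ≤ 1
  have hrne0 : (Set.range (x 0)).Nonempty := ⟨x 0 ⟨0, hn0⟩, Set.mem_range_self _⟩
  have hub0 : sSup (Set.range (x 0)) ≤ 1 := by
    apply csSup_le hrne0
    rintro y ⟨p, rfl⟩
    exact (hx0 p).2
  have hlb0 : 0 ≤ sInf (Set.range (x 0)) := by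
    apply le_csInf hrne0
    rintro y ⟨p, rfl⟩
    exact (hx0 p).1
  have hδ0 : delta (x 0) ≤ 1 := by
    rw [delta]; linarith
  set L := ⌈Real.logb (1 / (1 - ρ)) (1 / ε)⌉₊ with hL
  have hpownn : (0:ℝ) ≤ (1 - ρ) ^ L := pow_nonneg hρ1 L
  have hpow : (1 - ρ) ^ L ≤ ε := pow_le_eps hρ0 hρ2 hε0
  calc delta (x L) ≤ (1 - ρ) ^ L * delta (x 0) := hiter L
    _ ≤ (1 - ρ) ^ L * 1 := mul_le_mul_of_nonneg_left hδ0 hpownn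
    _ = (1 - ρ) ^ L := mul_one _
    _ ≤ ε := hpow
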